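/- The exponential generating function of the sequence b_n = sum_{m=0}^{n} M(n,m) * T(m,k), where M(n,m) = sum_{i=m}^{n} S(n,i)*C(i,m) and T(m,k) = sum_i m!/(i!*(m-2i)!*2^i) * k^{m-i}, is exp((k/2)*exp(2x) + exp(x) - (k+2)/2). -/

import Mathlib

/-- Stirling numbers of the second kind. -/
def stirling2 : ℕ → ℕ → ℕ
  | 0, 0 => 1
  | 0, _ + 1 => 0
  | _ + 1, 0 => 0
  | n + 1, k + 1 => (k + 1) * stirling2 n (k + 1) + stirling2 n k

/-- `M n m = ∑_{i=m}^{n} S(n,i) * C(i,m)`, the number of merge diagrams from `n` to `m`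
strands in the cobordism category. -/
def mergeCount (n m : ℕ) : ℕ :=
  ∑ i ∈ Finset.Icc m n, stirling2 n i * Nat.choose i m

/-- `T m k = ∑_i m!/(i!(m-2i)!2^i) * k^(m-i)`, the number of standard `k`-multitableaux
of size `m`. -/
noncomputable def multitabCount (m k : ℕ) : ℚ :=
  ∑ i ∈ Finset.range (m / 2 + 1),
    (m.factorial : ℚ) / ((i.factorial : ℚ) * ((m - 2 * i).factorial : ℚ) * 2 ^ i) *
      (k : ℚ) ^ (m - i)

/-- The formal exponential `exp ∘ g` of a formal power series `g` (with zero constant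
coefficient), defined coefficientwise. -/
noncomputable def expComp (g : PowerSeries ℚ) : PowerSeries ℚ :=
  PowerSeries.mk fun n =>
    ∑ k ∈ Finset.range (n + 1), ((k.factorial : ℚ))⁻¹ * PowerSeries.coeff n (g ^ k)

open Finset PowerSeries

lemma stirling2_succ_succ (n j : ℕ) :
    stirling2 (n+1) (j+1) = (j+1) * stirling2 n (j+1) + stirling2 n j := rfl

lemma stirling2_eq_zero {n i : ℕ} (h : n < i) : stirling2 n i = 0 := by
  induction n generalizing i with
  | zero => cases i with
    | zero => omega
    | succ j => rfl
  | succ n ih =>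
    cases i with
    | zero => omega
    | succ j =>
      rw [stirling2_succ_succ, ih (by omega), ih (by omega)]
      ring

lemma coeff_expComp (g : PowerSeries ℚ) (n : ℕ) :
    PowerSeries.coeff n (expComp g)
      = ∑ j ∈ range (n+1), ((j.factorial : ℚ))⁻¹ * PowerSeries.coeff n (g ^ j) := by
  simp [expComp]

lemma coeff_EE (n : ℕ) : PowerSeries.coeff n (expComp PowerSeries.X) = (n.factorial : ℚ)⁻¹ := by
  rw [coeff_expComp, Finset.sum_eq_single n]
  · rw [coeff_X_pow, if_pos rfl, mul_one]
  · intro j _ hj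
    rw [coeff_X_pow, if_neg (fun h => hj h.symm), mul_zero]
  · intro h
    exact absurd (self_mem_range_succ n) h

lemma stirling2_sum (n j : ℕ) :
    stirling2 (n+1) (j+1) = ∑ p ∈ range (n+1), n.choose p * stirling2 p j := by
  induction n generalizing j with
  | zero =>
    simp [stirling2_succ_succ]
    cases j <;> rfl
  | succ n ih =>
    have key : ∑ p ∈ range (n+2), (n+1).choose p * stirling2 p j
        = (∑ p ∈ range (n+1), n.choose p * stirling2 p j)
          + ∑ p ∈ range (n+1), n.choose p * stirling2 (p+1) j := by
      rw [Finset.sum_range_succ' (fun p => (n+1).choose p * stirling2 p j) (n+1)]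
      have : ∀ i, (n+1).choose (i+1) * stirling2 (i+1) j
          = n.choose i * stirling2 (i+1) j + n.choose (i+1) * stirling2 (i+1) j := by
        intro i; rw [Nat.choose_succ_succ, add_mul]
      rw [Finset.sum_congr rfl (fun i _ => this i), Finset.sum_add_distrib]
      have h2 : (∑ p ∈ range (n+1), n.choose (p+1) * stirling2 (p+1) j)
          + (n+1).choose 0 * stirling2 0 j
          = ∑ p ∈ range (n+1), n.choose p * stirling2 p j := by
        rw [Nat.choose_zero_right, one_mul]
        have hext : (∑ p ∈ range (n+2), n.choose p * stirling2 p j)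
            = ∑ p ∈ range (n+1), n.choose p * stirling2 p j := by
          rw [Finset.sum_range_succ, Nat.choose_succ_self, zero_mul, add_zero]
        rw [← hext, Finset.sum_range_succ' (fun p => n.choose p * stirling2 p j) (n+1),
          Nat.choose_zero_right, one_mul]
      omega
    rw [key]
    cases j with
    | zero =>
      have hz : ∀ p, stirling2 (p+1) 0 = 0 := fun p => rfl
      simp only [hz, mul_zero, Finset.sum_const_zero, add_zero]
      rw [stirling2_succ_succ, ← ih 0]
      have : stirling2 (n+1) 0 = 0 := rfl
      omega
    | succ j' =>
      have : ∀ p, n.choose p * stirling2 (p+1) (j'+1)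
          = (j'+1) * (n.choose p * stirling2 p (j'+1)) + n.choose p * stirling2 p j' := by
        intro p; rw [stirling2_succ_succ]; ring
      rw [Finset.sum_congr rfl (fun p _ => this p), Finset.sum_add_distrib, ← Finset.mul_sum,
        ← ih (j'+1), ← ih j', stirling2_succ_succ]
      ring

lemma stirling2_sum_lt (n j : ℕ) :
    ∑ p ∈ range n, n.choose p * stirling2 p j = (j+1) * stirling2 n (j+1) := by
  have h1 := stirling2_sum n j
  rw [Finset.sum_range_succ, Nat.choose_self, one_mul] at h1
  have h2 := stirling2_succ_succ n j
  omega

lemma coeff_u (n : ℕ) : PowerSeries.coeff n (expComp PowerSeries.X - 1)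
    = if n = 0 then 0 else (n.factorial : ℚ)⁻¹ := by
  rw [map_sub, coeff_EE, coeff_one]
  split <;> simp_all

lemma coeff_u_pow (i n : ℕ) : PowerSeries.coeff n ((expComp PowerSeries.X - 1) ^ i)
    = (stirling2 n i : ℚ) * i.factorial / n.factorial := by
  induction i generalizing n with
  | zero =>
    cases n with
    | zero => simp [stirling2]
    | succ m => simp [stirling2, coeff_one]
  | succ i ih =>
    rw [pow_succ, coeff_mul, Finset.Nat.sum_antidiagonal_eq_sum_range_succ_mk,
      Finset.sum_range_succ]
    simp only [ih, coeff_u]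
    rw [Nat.sub_self, if_pos rfl, mul_zero, add_zero]
    have key : ∀ p ∈ range n,
        (stirling2 p i : ℚ) * i.factorial / p.factorial * (if n - p = 0 then 0 else ((n-p).factorial : ℚ)⁻¹)
        = ((n.choose p * stirling2 p i : ℕ) : ℚ) * i.factorial / n.factorial := by
      intro p hp
      have hlt : p < n := mem_range.mp hp
      rw [if_neg (by omega)]
      have hc := Nat.choose_mul_factorial_mul_factorial (le_of_lt hlt)
      have hcq : ((n.choose p : ℚ)) * p.factorial * (n-p).factorial = n.factorial := by
        exact_mod_cast congrArg Nat.cast hc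
      have h1 : (p.factorial : ℚ) ≠ 0 := Nat.cast_ne_zero.mpr p.factorial_ne_zero
      have h2 : ((n-p).factorial : ℚ) ≠ 0 := Nat.cast_ne_zero.mpr (n-p).factorial_ne_zero
      have h3 : (n.factorial : ℚ) ≠ 0 := Nat.cast_ne_zero.mpr n.factorial_ne_zero
      have h4 : (n.choose p : ℚ) ≠ 0 :=
        Nat.cast_ne_zero.mpr (Nat.choose_pos (le_of_lt hlt)).ne'
      push_cast
      rw [← hcq]
      field_simp
    rw [Finset.sum_congr rfl key]
    rw [← Finset.sum_div, ← Finset.sum_mul, ← Nat.cast_sum, stirling2_sum_lt]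
    push_cast [Nat.factorial_succ]
    ring

lemma expComp_two_X :
    expComp (PowerSeries.C 2 * PowerSeries.X) = (expComp PowerSeries.X) ^ 2 := by
  ext n
  rw [coeff_expComp, pow_two, coeff_mul, Finset.Nat.sum_antidiagonal_eq_sum_range_succ_mk]
  have h1 : ∀ j, (PowerSeries.C (2:ℚ) * PowerSeries.X) ^ j
      = PowerSeries.C ((2:ℚ)^j) * PowerSeries.X ^ j := by
    intro j; rw [mul_pow, ← map_pow]
  simp only [h1, coeff_C_mul, coeff_X_pow]
  rw [Finset.sum_eq_single n]
  · rw [if_pos rfl, mul_one]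
    have h2 : ∀ p ∈ range (n+1),
        PowerSeries.coeff p (expComp PowerSeries.X)
          * PowerSeries.coeff (n-p) (expComp PowerSeries.X)
        = (n.choose p : ℚ) / n.factorial := by
      intro p hp
      have hle : p ≤ n := by simpa using Nat.lt_succ_iff.mp (mem_range.mp hp)
      rw [coeff_EE, coeff_EE]
      have hc := Nat.choose_mul_factorial_mul_factorial hle
      have hcq : ((n.choose p : ℚ)) * p.factorial * (n-p).factorial = n.factorial := by
        exact_mod_cast congrArg Nat.cast hc
      have h1 : (p.factorial : ℚ) ≠ 0 := Nat.cast_ne_zero.mpr p.factorial_ne_zero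
      have h2 : ((n-p).factorial : ℚ) ≠ 0 := Nat.cast_ne_zero.mpr (n-p).factorial_ne_zero
      have h3 : (n.factorial : ℚ) ≠ 0 := Nat.cast_ne_zero.mpr n.factorial_ne_zero
      have h4 : (n.choose p : ℚ) ≠ 0 := Nat.cast_ne_zero.mpr (Nat.choose_pos hle).ne'
      rw [← hcq]
      field_simp
    rw [Finset.sum_congr rfl h2, ← Finset.sum_div, ← Nat.cast_sum, Nat.sum_range_choose]
    push_cast
    ring
  · intro j _ hj
    rw [if_neg (fun h => hj h.symm), mul_zero, mul_zero]
  · intro h; exact absurd (self_mem_range_succ n) h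

lemma arg_eq (k : ℕ) :
    PowerSeries.C ((k : ℚ) / 2) * expComp (PowerSeries.C 2 * PowerSeries.X) +
        expComp PowerSeries.X - PowerSeries.C (((k : ℚ) + 2) / 2)
      = PowerSeries.C ((k:ℚ)+1) * (expComp PowerSeries.X - 1)
        + PowerSeries.C ((k:ℚ)/2) * (expComp PowerSeries.X - 1)^2 := by
  rw [expComp_two_X]
  have e1 : PowerSeries.C (((k : ℚ) + 2) / 2) = PowerSeries.C ((k:ℚ)/2) + 1 := by
    rw [show ((k:ℚ)+2)/2 = (k:ℚ)/2 + 1 by ring, map_add, map_one]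
  have e2 : PowerSeries.C ((k:ℚ)+1) = PowerSeries.C ((k:ℚ)/2) * 2 + 1 := by
    rw [show (k:ℚ)+1 = (k:ℚ)/2*2 + 1 by ring, map_add, map_mul, map_one, map_ofNat]
  rw [e1, e2]
  ring

lemma coeff_g_pow (a b : ℚ) (j n : ℕ) :
    PowerSeries.coeff n ((PowerSeries.C a * (expComp PowerSeries.X - 1)
        + PowerSeries.C b * (expComp PowerSeries.X - 1)^2)^j)
      = ∑ m ∈ range (j+1), a^m * b^(j-m) * (j.choose m : ℚ)
          * ((stirling2 n (2*j-m) : ℚ) * ((2*j-m).factorial : ℚ) / (n.factorial : ℚ)) := by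
  rw [add_pow, map_sum]
  refine Finset.sum_congr rfl fun m hm => ?_
  have hmj : m ≤ j := by simpa using Nat.lt_succ_iff.mp (mem_range.mp hm)
  have key : (PowerSeries.C a * (expComp PowerSeries.X - 1))^m
        * (PowerSeries.C b * (expComp PowerSeries.X - 1)^2)^(j-m)
        * ((j.choose m : ℕ) : PowerSeries ℚ)
      = PowerSeries.C (a^m * b^(j-m) * (j.choose m : ℚ))
          * (expComp PowerSeries.X - 1)^(2*j-m) := by
    rw [mul_pow, mul_pow, show 2*j - m = m + 2*(j-m) from by omega, pow_add, pow_mul,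
      ← map_natCast (PowerSeries.C (R := ℚ)) (j.choose m), map_mul, map_mul, map_pow, map_pow]
    ring
  rw [key, coeff_C_mul, coeff_u_pow]

noncomputable def dQ (k i : ℕ) : ℚ :=
  ∑ m ∈ range (i+1), (i.choose m : ℚ) * multitabCount m k

noncomputable def eQ (k i : ℕ) : ℚ :=
  ∑ a ∈ range (i/2+1),
    (i.factorial : ℚ) / ((a.factorial : ℚ) * ((i - 2*a).factorial : ℚ) * 2^a)
      * (k:ℚ)^a * ((k:ℚ)+1)^(i-2*a)

lemma lhs_sum (k n : ℕ) :
    ∑ m ∈ range (n+1), (mergeCount n m : ℚ) * multitabCount m k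
      = ∑ i ∈ range (n+1), (stirling2 n i : ℚ) * dQ k i := by
  have h1 : ∀ m, (mergeCount n m : ℚ) * multitabCount m k
      = ∑ i ∈ Icc m n, (stirling2 n i : ℚ) * ((i.choose m : ℚ) * multitabCount m k) := by
    intro m
    rw [mergeCount]
    push_cast
    rw [Finset.sum_mul]
    exact Finset.sum_congr rfl fun i _ => by ring
  have h2 : ∀ i, (stirling2 n i : ℚ) * dQ k i
      = ∑ m ∈ range (i+1), (stirling2 n i : ℚ) * ((i.choose m : ℚ) * multitabCount m k) := by
    intro i
    rw [dQ, Finset.mul_sum]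
  simp only [h1, h2]
  rw [Finset.sum_sigma', Finset.sum_sigma']
  refine Finset.sum_nbij' (fun x => ⟨x.2, x.1⟩) (fun x => ⟨x.2, x.1⟩) ?_ ?_ ?_ ?_ ?_
  · intro x hx
    simp only [mem_sigma, mem_range, mem_Icc] at hx ⊢
    omega
  · intro x hx
    simp only [mem_sigma, mem_range, mem_Icc] at hx ⊢
    omega
  · intro x _; rfl
  · intro x _; rfl
  · intro x _; rfl

lemma dQ_eq_eQ (k i : ℕ) : dQ k i = eQ k i := by
  have h1 : ∀ m, (i.choose m : ℚ) * multitabCount m k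
      = ∑ t ∈ range (m/2+1), (i.choose m : ℚ)
          * ((m.factorial : ℚ) / ((t.factorial : ℚ) * ((m - 2*t).factorial : ℚ) * 2^t)
              * (k:ℚ)^(m-t)) := by
    intro m; rw [multitabCount, Finset.mul_sum]
  have h2 : ∀ a, (i.factorial : ℚ) / ((a.factorial : ℚ) * ((i - 2*a).factorial : ℚ) * 2^a)
        * (k:ℚ)^a * ((k:ℚ)+1)^(i-2*a)
      = ∑ s ∈ range (i-2*a+1),
          (i.factorial : ℚ) / ((a.factorial : ℚ) * ((i - 2*a).factorial : ℚ) * 2^a)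
            * (k:ℚ)^a * ((k:ℚ)^s * ((i-2*a).choose s : ℚ)) := by
    intro a
    rw [add_pow, Finset.mul_sum]
    exact Finset.sum_congr rfl fun s _ => by rw [one_pow]; ring
  rw [dQ, eQ]
  simp only [h1, h2]
  rw [Finset.sum_sigma', Finset.sum_sigma']
  refine Finset.sum_nbij' (fun x => ⟨x.2, x.1 - 2*x.2⟩) (fun x => ⟨2*x.1 + x.2, x.1⟩)
    ?_ ?_ ?_ ?_ ?_
  · intro x hx
    simp only [mem_sigma, mem_range] at hx ⊢
    omega
  · intro x hx
    simp only [mem_sigma, mem_range] at hx ⊢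
    omega
  · intro x hx
    obtain ⟨m, t⟩ := x
    simp only [mem_sigma, mem_range] at hx
    dsimp only
    rw [show 2*t + (m - 2*t) = m by omega]
  · intro x hx
    obtain ⟨a, s⟩ := x
    simp only [mem_sigma, mem_range] at hx
    dsimp only
    rw [show 2*a + s - 2*a = s by omega]
  · intro x hx
    obtain ⟨m, t⟩ := x
    simp only [mem_sigma, mem_range] at hx
    obtain ⟨hm, ht⟩ := hx
    have h2t : 2*t ≤ m := by omega
    have hmi : m ≤ i := by omega
    simp only
    have e1 : i - 2*t - (m - 2*t) = i - m := by omega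
    have e2 : m - t = t + (m - 2*t) := by omega
    have hc1 : ((i.choose m : ℚ)) * m.factorial * (i-m).factorial = i.factorial := by
      exact_mod_cast congrArg Nat.cast (Nat.choose_mul_factorial_mul_factorial hmi)
    have hc2 : (((i-2*t).choose (m-2*t) : ℚ)) * (m-2*t).factorial * (i-m).factorial
        = (i-2*t).factorial := by
      have := Nat.choose_mul_factorial_mul_factorial (show m - 2*t ≤ i - 2*t by omega)
      rw [e1] at this
      exact_mod_cast congrArg Nat.cast this
    have n1 : (t.factorial : ℚ) ≠ 0 := Nat.cast_ne_zero.mpr t.factorial_ne_zero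
    have n2 : ((m-2*t).factorial : ℚ) ≠ 0 := Nat.cast_ne_zero.mpr (m-2*t).factorial_ne_zero
    have n3 : ((i-2*t).factorial : ℚ) ≠ 0 := Nat.cast_ne_zero.mpr (i-2*t).factorial_ne_zero
    have n4 : ((i-m).factorial : ℚ) ≠ 0 := Nat.cast_ne_zero.mpr (i-m).factorial_ne_zero
    have n5 : (m.factorial : ℚ) ≠ 0 := Nat.cast_ne_zero.mpr m.factorial_ne_zero
    have n6 : (2:ℚ)^t ≠ 0 := pow_ne_zero _ two_ne_zero
    have n7 : (((i-2*t).choose (m-2*t)) : ℚ) ≠ 0 :=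
      Nat.cast_ne_zero.mpr (Nat.choose_pos (by omega)).ne'
    rw [e2, pow_add, ← hc1, ← hc2]
    field_simp

lemma rhs_sum (k n : ℕ) :
    ∑ j ∈ range (n+1), (j.factorial : ℚ)⁻¹ *
        ∑ m ∈ range (j+1), ((k:ℚ)+1)^m * ((k:ℚ)/2)^(j-m) * (j.choose m : ℚ)
          * ((stirling2 n (2*j-m) : ℚ) * ((2*j-m).factorial : ℚ) / (n.factorial : ℚ))
      = (∑ i ∈ range (n+1), (stirling2 n i : ℚ) * eQ k i) / (n.factorial : ℚ) := by
  simp only [Finset.mul_sum]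
  rw [Finset.sum_div]
  have h2 : ∀ i, (stirling2 n i : ℚ) * eQ k i / (n.factorial : ℚ)
      = ∑ a ∈ range (i/2+1), (stirling2 n i : ℚ)
          * ((i.factorial : ℚ) / ((a.factorial : ℚ) * ((i - 2*a).factorial : ℚ) * 2^a)
            * (k:ℚ)^a * ((k:ℚ)+1)^(i-2*a)) / (n.factorial : ℚ) := by
    intro i
    rw [eQ, Finset.mul_sum, Finset.sum_div]
  simp only [h2]
  rw [Finset.sum_sigma', Finset.sum_sigma']
  rw [← Finset.sum_filter_of_ne (p := fun x : (_ : ℕ) × ℕ => 2*x.1 - x.2 ≤ n)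
    (fun x _ hne => ?_)]
  swap
  · by_contra hgt
    apply hne
    rw [stirling2_eq_zero (show n < 2*x.1 - x.2 by omega)]
    push_cast
    ring
  refine Finset.sum_nbij' (fun x => ⟨2*x.1 - x.2, x.1 - x.2⟩)
    (fun x => ⟨x.1 - x.2, x.1 - 2*x.2⟩) ?_ ?_ ?_ ?_ ?_
  · intro x hx
    obtain ⟨j, m⟩ := x
    simp only [mem_filter, mem_sigma, mem_range] at hx ⊢
    omega
  · intro x hx
    obtain ⟨i, a⟩ := x
    simp only [mem_filter, mem_sigma, mem_range] at hx ⊢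
    omega
  · intro x hx
    obtain ⟨j, m⟩ := x
    simp only [mem_filter, mem_sigma, mem_range] at hx
    dsimp only
    rw [show 2*j - m - (j - m) = j by omega, show 2*j - m - 2*(j-m) = m by omega]
  · intro x hx
    obtain ⟨i, a⟩ := x
    simp only [mem_filter, mem_sigma, mem_range] at hx
    dsimp only
    rw [show 2*(i-a) - (i - 2*a) = i by omega, show i - a - (i - 2*a) = a by omega]
  · intro x hx
    obtain ⟨j, m⟩ := x
    simp only [mem_filter, mem_sigma, mem_range] at hx
    have hmj : m ≤ j := by omega
    dsimp only
    rw [show 2*j - m - 2*(j-m) = m by omega]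
    have hc : ((j.choose m : ℚ)) * m.factorial * (j-m).factorial = j.factorial := by
      exact_mod_cast congrArg Nat.cast (Nat.choose_mul_factorial_mul_factorial hmj)
    have n1 : (m.factorial : ℚ) ≠ 0 := Nat.cast_ne_zero.mpr m.factorial_ne_zero
    have n2 : ((j-m).factorial : ℚ) ≠ 0 := Nat.cast_ne_zero.mpr (j-m).factorial_ne_zero
    have n3 : (n.factorial : ℚ) ≠ 0 := Nat.cast_ne_zero.mpr n.factorial_ne_zero
    have n4 : ((2:ℚ))^(j-m) ≠ 0 := pow_ne_zero _ two_ne_zero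
    have n5 : ((j.choose m : ℚ)) ≠ 0 := Nat.cast_ne_zero.mpr (Nat.choose_pos hmj).ne'
    rw [div_pow, ← hc]
    field_simp

/-- For the cobordism category `Cob_k`: the exponential generating function of
`b_n = ∑_{m=0}^{n} M(n,m) * T(m,k)` is `exp((k/2)·exp(2x) + exp(x) - (k+2)/2)`. -/
theorem cob_egf (k : ℕ) (hk : 0 < k) :
    PowerSeries.mk (fun n =>
        (∑ m ∈ Finset.range (n + 1), (mergeCount n m : ℚ) * multitabCount m k) /
          (n.factorial : ℚ)) =
      expComp (PowerSeries.C ((k : ℚ) / 2) * expComp (PowerSeries.C (2 : ℚ) * PowerSeries.X) +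
        expComp PowerSeries.X - PowerSeries.C (((k : ℚ) + 2) / 2)) := by
  rw [arg_eq k]
  ext n
  rw [coeff_mk, coeff_expComp]
  simp only [coeff_g_pow ((k:ℚ)+1) ((k:ℚ)/2)]
  rw [rhs_sum, lhs_sum]
  simp only [dQ_eq_eQ]
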